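/- Consider the Mansfield–Marí Beffa–Wang equation: 𝔽¹ = u¹₀·u²₀, 𝔽² = u¹₋₁/u¹₀ − u¹₀/u¹₁. Then the matrices M̂ = [[λ − u²₀, 1/u¹₀],[−u¹₀, 0]] and Û = [[0, −1/u¹₀],[u¹₋₁, λ]] form an MLR for this equation: D_t(M̂) = S(Û)·M̂ − M̂·Û. -/

import Mathlib

open MvPolynomial

/-- Variables: `none` is `λ`; `some (j, ℓ)` is `u^j_ℓ`. -/
abbrev VarC := Option (Fin 2 × ℤ)

/-- Polynomial ring over `K` in `λ`, `u¹_ℓ`, `u²_ℓ`. -/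
abbrev PolyC (K : Type) [Field K] := MvPolynomial VarC K

/-- Field of rational functions over `K` in `λ`, `u¹_ℓ`, `u²_ℓ`. -/
abbrev FC (K : Type) [Field K] := FractionRing (PolyC K)

/-- The spectral parameter `λ`. -/
noncomputable def lam (K : Type) [Field K] : FC K :=
  algebraMap (PolyC K) (FC K) (X none)

/-- The variable `u¹_ℓ`. -/
noncomputable def U1 (K : Type) [Field K] (ℓ : ℤ) : FC K :=
  algebraMap (PolyC K) (FC K) (X (some (0, ℓ)))

/-- The variable `u²_ℓ`. -/
noncomputable def U2 (K : Type) [Field K] (ℓ : ℤ) : FC K :=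
  algebraMap (PolyC K) (FC K) (X (some (1, ℓ)))

/-- `𝔽¹ = u¹₀·u²₀` of the Mansfield–Marí Beffa–Wang equation. -/
noncomputable def Feq1 (K : Type) [Field K] : FC K := U1 K 0 * U2 K 0

/-- `𝔽² = u¹₋₁/u¹₀ − u¹₀/u¹₁` of the Mansfield–Marí Beffa–Wang equation. -/
noncomputable def Feq2 (K : Type) [Field K] : FC K := U1 K (-1) / U1 K 0 - U1 K 0 / U1 K 1

set_option maxHeartbeats 1000000 in
/-- `F` is the field of rational functions over a char-0 field `K` in `λ, u¹_ℓ, u²_ℓ`; `S` is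
the field automorphism over `K` fixing `λ` with `S(u^j_ℓ) = u^j_{ℓ+1}`, and `D_t` is the
total derivative of the Mansfield–Marí Beffa–Wang equation `∂_t u^j = 𝔽^j` (the unique
derivation with `D_t(λ) = 0`, `D_t(u^j_ℓ) = S^ℓ(𝔽^j)`); both are quantified by these
characterizing properties.  Claim: the matrices `M̂ = [[λ − u²₀, 1/u¹₀],[−u¹₀, 0]]` and
`Û = [[0, −1/u¹₀],[u¹₋₁, λ]]` form an MLR: `det M̂ ≠ 0` and `D_t(M̂) = S(Û)·M̂ − M̂·Û`. -/
theorem stmt_16 (K : Type) [Field K] [CharZero K]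
    (S : FC K ≃+* FC K)
    (hSK : ∀ x : K, S (algebraMap K (FC K) x) = algebraMap K (FC K) x)
    (hSlam : S (lam K) = lam K)
    (hSu1 : ∀ ℓ : ℤ, S (U1 K ℓ) = U1 K (ℓ + 1))
    (hSu2 : ∀ ℓ : ℤ, S (U2 K ℓ) = U2 K (ℓ + 1))
    (Dt : FC K → FC K)
    (hDadd : ∀ x y, Dt (x + y) = Dt x + Dt y)
    (hDmul : ∀ x y, Dt (x * y) = x * Dt y + Dt x * y)
    (hDK : ∀ x : K, Dt (algebraMap K (FC K) x) = 0)
    (hDlam : Dt (lam K) = 0)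
    (hDu1 : ∀ ℓ : ℤ, Dt (U1 K ℓ) = (S ^ ℓ) (Feq1 K))
    (hDu2 : ∀ ℓ : ℤ, Dt (U2 K ℓ) = (S ^ ℓ) (Feq2 K)) :
    (!![lam K - U2 K 0, 1 / U1 K 0; -U1 K 0, 0] : Matrix (Fin 2) (Fin 2) (FC K)).det ≠ 0 ∧
    (!![lam K - U2 K 0, 1 / U1 K 0; -U1 K 0, 0] : Matrix (Fin 2) (Fin 2) (FC K)).map Dt =
      (!![0, -(1 / U1 K 0); U1 K (-1), lam K] : Matrix (Fin 2) (Fin 2) (FC K)).map ⇑S *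
        !![lam K - U2 K 0, 1 / U1 K 0; -U1 K 0, 0] -
      !![lam K - U2 K 0, 1 / U1 K 0; -U1 K 0, 0] *
        !![0, -(1 / U1 K 0); U1 K (-1), lam K] := by
  have hu : ∀ ℓ : ℤ, U1 K ℓ ≠ 0 := fun ℓ =>
    (map_ne_zero_iff _ (IsFractionRing.injective (PolyC K) (FC K))).mpr
      (MvPolynomial.X_ne_zero _)
  have Dt0 : Dt 0 = 0 := by
    have h := hDadd 0 0
    simp only [add_zero] at h
    exact (left_eq_add.mp h)
  have Dt1 : Dt 1 = 0 := by
    have h := hDmul 1 1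
    simp only [one_mul, mul_one] at h
    exact (left_eq_add.mp h)
  have Dneg : ∀ x, Dt (-x) = -Dt x := by
    intro x
    have h := hDadd x (-x)
    rw [add_neg_cancel, Dt0] at h
    linear_combination -h
  have hS0 : ∀ x : FC K, (S ^ (0:ℤ)) x = x := by
    intro x; rw [zpow_zero]; rfl
  have hD10 : Dt (U1 K 0) = U1 K 0 * U2 K 0 := by
    rw [hDu1 0, hS0, Feq1]
  have hD20 : Dt (U2 K 0) = U1 K (-1) / U1 K 0 - U1 K 0 / U1 K 1 := by
    rw [hDu2 0, hS0, Feq2]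
  have hu0 := hu 0
  have hu1 := hu 1
  have hDinv : Dt (1 / U1 K 0) = -(U2 K 0) / U1 K 0 := by
    have h := hDmul (U1 K 0) (1 / U1 K 0)
    rw [mul_one_div, div_self hu0, Dt1, hD10] at h
    field_simp at h ⊢
    linear_combination -h
  have hDsub : Dt (lam K - U2 K 0) = -(U1 K (-1) / U1 K 0 - U1 K 0 / U1 K 1) := by
    rw [sub_eq_add_neg, hDadd, hDlam, Dneg, hD20]
    ring
  have hSinv : S (1 / U1 K 0) = 1 / U1 K 1 := by
    rw [map_div₀, map_one, hSu1]
    norm_num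
  refine ⟨?_, ?_⟩
  · rw [Matrix.det_fin_two_of]
    have : (lam K - U2 K 0) * 0 - 1 / U1 K 0 * (-U1 K 0) = 1 := by field_simp; ring
    rw [this]; exact one_ne_zero
  · ext i j
    fin_cases i <;> fin_cases j <;>
      simp only [Fin.zero_eta, Fin.mk_one, Fin.isValue, Matrix.map_apply, Matrix.sub_apply,
        Matrix.mul_apply, Fin.sum_univ_two, Matrix.of_apply, Matrix.cons_val', Matrix.cons_val_zero,
        Matrix.cons_val_one, Matrix.head_cons, Matrix.head_fin_const, Matrix.empty_val',
        Matrix.cons_val_fin_one]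
    · rw [hDsub]
      simp only [map_zero, map_neg, hSinv]
      field_simp
      ring
    · rw [hDinv]
      simp only [map_zero, map_neg, hSinv]
      field_simp
      ring
    · rw [Dneg, hD10]
      simp only [map_zero, hSu1, hSlam]
      norm_num
      ring
    · rw [Dt0]
      simp only [map_zero, hSu1, hSlam]
      rw [neg_add_cancel]; ring
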